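/- Fix positive integers $k$ and $d$ with $k + 1 < d$. Then there exist a symmetric positive definite matrix $S_0 \in \mathbb{R}^{d\times d}$, a full-column-rank matrix $A_0 \in \mathbb{R}^{d\times m}$ (for some $k \le m \le d-1$), and a vector $b_0 \in \mathbb{R}^d$ such that the unique minimizer $x^\star$ of $\frac12 x^\top S_0 x - b_0^\top x$ subject to $A_0^\top x = 0$ satisfies $P_{A_0^\perp} S_0^i (S_0 x^\star - b_0) = 0$ for all $i = 0, 1, \ldots, k-1$, and $P_{A_0^\perp} S_0^k (S_0 x^\star - b_0) \ne 0$. -/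

import Mathlib

open Matrix

/-- The null space of `Aᵀ`, as a subspace of `ℝ^d`. -/
noncomputable def nullSpaceT {d q : ℕ} (A : Matrix (Fin d) (Fin q) ℝ) :
    Submodule ℝ (EuclideanSpace ℝ (Fin d)) :=
  LinearMap.ker ((Matrix.mulVecLin A.transpose).comp
    ((EuclideanSpace.equiv (Fin d) ℝ).toLinearEquiv.toLinearMap))

/-- Multiplication of a square matrix with a Euclidean vector. -/
noncomputable def mulE {d : ℕ} (S : Matrix (Fin d) (Fin d) ℝ)
    (x : EuclideanSpace ℝ (Fin d)) : EuclideanSpace ℝ (Fin d) :=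
  (EuclideanSpace.equiv (Fin d) ℝ).symm (S.mulVec ((EuclideanSpace.equiv (Fin d) ℝ) x))

/-- The quadratic objective `½ xᵀ S x - bᵀ x`. -/
noncomputable def quadObj {d : ℕ} (S : Matrix (Fin d) (Fin d) ℝ)
    (b x : EuclideanSpace ℝ (Fin d)) : ℝ :=
  (1 / 2) * ∑ i, x i * (∑ j, S i j * x j) - ∑ i, b i * x i

/-! ### Auxiliary construction -/

/-- Upper bidiagonal matrix with ones on diagonal and superdiagonal. -/
def Bmat (d : ℕ) : Matrix (Fin d) (Fin d) ℝ :=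
  fun i l => (if (l : ℕ) = (i : ℕ) then 1 else 0) + (if (l : ℕ) = (i : ℕ) + 1 then 1 else 0)

/-- Symmetric tridiagonal positive definite matrix. -/
def Smat (d : ℕ) : Matrix (Fin d) (Fin d) ℝ := Bmat d * (Bmat d)ᵀ

lemma Bmat_col_sum {d : ℕ} (x : Fin d → ℝ) (l : Fin d) :
    ∑ i, Bmat d i l * x i
      = x l + (if h : 1 ≤ (l : ℕ) then x ⟨(l : ℕ) - 1, by omega⟩ else 0) := by
  simp only [Bmat, add_mul]
  rw [Finset.sum_add_distrib]
  congr 1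
  · rw [show x l = ∑ i, if i = l then x i else 0 by simp]
    refine Finset.sum_congr rfl fun i _ => ?_
    by_cases h : i = l
    · simp [h]
    · have : (l : ℕ) ≠ (i : ℕ) := fun hv => h (Fin.ext hv.symm)
      simp [h, this]
  · by_cases h : 1 ≤ (l : ℕ)
    · rw [dif_pos h]
      have hm : ((l : ℕ) - 1) < d := by omega
      rw [show x ⟨(l : ℕ) - 1, hm⟩ = ∑ i, if i = (⟨(l : ℕ) - 1, hm⟩ : Fin d) then x i else 0
        by simp]
      refine Finset.sum_congr rfl fun i _ => ?_
      by_cases hi : i = (⟨(l : ℕ) - 1, hm⟩ : Fin d)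
      · have : (l : ℕ) = (i : ℕ) + 1 := by
          have := congrArg Fin.val hi; simp at this; omega
        rw [if_pos this, if_pos hi, one_mul]
      · have : (l : ℕ) ≠ (i : ℕ) + 1 := by
          intro hv
          exact hi (Fin.ext (by simp; omega))
        simp [hi, this]
    · rw [dif_neg h]
      refine Finset.sum_eq_zero fun i _ => ?_
      have : (l : ℕ) ≠ (i : ℕ) + 1 := by omega
      simp [this]

lemma BmatT_mulVec_eq_zero {d : ℕ} {x : Fin d → ℝ} (h : (Bmat d)ᵀ *ᵥ x = 0) : x = 0 := by
  have key : ∀ l : Fin d, x l + (if h : 1 ≤ (l : ℕ) then x ⟨(l : ℕ) - 1, by omega⟩ else 0) = 0 := by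
    intro l
    have := congrFun h l
    rw [Matrix.mulVec, dotProduct] at this
    simp only [Matrix.transpose_apply] at this
    rw [← Bmat_col_sum x l]
    simpa using this
  have main : ∀ n (hn : n < d), x ⟨n, hn⟩ = 0 := by
    intro n
    induction n with
    | zero =>
      intro hn
      have := key ⟨0, hn⟩
      simpa using this
    | succ m ih =>
      intro hn
      have hm : m < d := by omega
      have := key ⟨m + 1, hn⟩
      rw [dif_pos (by simp)] at this
      simp only at this
      have hx : x ⟨m + 1 - 1, by omega⟩ = 0 := by
        have : (⟨m + 1 - 1, by omega⟩ : Fin d) = ⟨m, hm⟩ := by simp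
        rw [this]; exact ih hm
      rw [hx] at this
      linarith
  funext l
  have := main l.1 l.2
  simpa using this

lemma Smat_posDef (d : ℕ) : (Smat d).PosDef := by
  rw [Matrix.posDef_iff_dotProduct_mulVec]
  constructor
  · ext i j
    simp only [Smat, Matrix.conjTranspose_apply, Matrix.mul_apply, Matrix.transpose_apply,
      star_sum, star_mul', star_trivial]
    exact Finset.sum_congr rfl fun l _ => mul_comm _ _
  · intro x hx
    have hy : (Bmat d)ᵀ *ᵥ x ≠ 0 := fun h => hx (BmatT_mulVec_eq_zero h)
    have : star x ⬝ᵥ (Smat d) *ᵥ x = ((Bmat d)ᵀ *ᵥ x) ⬝ᵥ ((Bmat d)ᵀ *ᵥ x) := by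
      rw [show (star x : Fin d → ℝ) = x from funext fun i => star_trivial _]
      rw [Smat, ← Matrix.mulVec_mulVec, dotProduct_mulVec, Matrix.mulVec_transpose]
    rw [this]
    have hnn : (0:ℝ) ≤ ((Bmat d)ᵀ *ᵥ x) ⬝ᵥ ((Bmat d)ᵀ *ᵥ x) :=
      Finset.sum_nonneg fun i _ => mul_self_nonneg _
    rcases lt_or_eq_of_le hnn with hlt | heq
    · exact hlt
    · exact absurd (dotProduct_self_eq_zero.mp heq.symm) hy

lemma Smat_upper_zero {d : ℕ} (i j : Fin d) (h : (i : ℕ) + 1 < (j : ℕ)) : Smat d i j = 0 := by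
  rw [Smat, Matrix.mul_apply]
  refine Finset.sum_eq_zero fun l _ => ?_
  simp only [Bmat, Matrix.transpose_apply]
  split_ifs <;> first | ring1 | (exfalso; omega)

lemma Smat_superdiag {d : ℕ} (i j : Fin d) (h : (i : ℕ) + 1 = (j : ℕ)) : Smat d i j = 1 := by
  rw [Smat, Matrix.mul_apply]
  rw [Finset.sum_eq_single j]
  · simp only [Bmat, Matrix.transpose_apply]
    split_ifs <;> first | ring1 | (exfalso; omega)
  · intro l _ hl
    have hlv : (l : ℕ) ≠ (j : ℕ) := fun hv => hl (Fin.ext hv)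
    simp only [Bmat, Matrix.transpose_apply]
    split_ifs <;> first | ring1 | (exfalso; omega)
  · intro hj
    exact absurd (Finset.mem_univ j) hj

lemma Spow_entry {d : ℕ} (hd : 0 < d) (n : ℕ) :
    ∀ j : Fin d, (n < (j : ℕ) → (Smat d ^ n) ⟨0, hd⟩ j = 0) ∧
      (n = (j : ℕ) → (Smat d ^ n) ⟨0, hd⟩ j = 1) := by
  induction n with
  | zero =>
    intro j
    constructor
    · intro hj
      have : (⟨0, hd⟩ : Fin d) ≠ j := fun hv => by
        have := congrArg Fin.val hv; simp at this; omega
      simp [Matrix.one_apply, this]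
    · intro hj
      have : (⟨0, hd⟩ : Fin d) = j := Fin.ext (by simp; omega)
      simp [Matrix.one_apply, this]
  | succ n ih =>
    intro j
    rw [pow_succ]
    constructor
    · intro hj
      rw [Matrix.mul_apply]
      refine Finset.sum_eq_zero fun l _ => ?_
      by_cases hl : n < (l : ℕ)
      · rw [(ih l).1 hl, zero_mul]
      · rw [Smat_upper_zero l j (by omega), mul_zero]
    · intro hj
      have hnd : n < d := by omega
      rw [Matrix.mul_apply]
      rw [Finset.sum_eq_single (⟨n, hnd⟩ : Fin d)]
      · rw [(ih ⟨n, hnd⟩).2 rfl, Smat_superdiag ⟨n, hnd⟩ j (by simp; omega), one_mul]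
      · intro l _ hl
        have hlv : (l : ℕ) ≠ n := fun hv => hl (Fin.ext (by simpa using hv))
        by_cases hc : n < (l : ℕ)
        · rw [(ih l).1 hc, zero_mul]
        · rw [Smat_upper_zero l j (by omega), mul_zero]
      · intro hmem
        exact absurd (Finset.mem_univ _) hmem

/-- The matrix whose columns are `e₁, …, e_{d-1}`. -/
def Amat (d : ℕ) : Matrix (Fin d) (Fin (d - 1)) ℝ :=
  fun i j => if (i : ℕ) = (j : ℕ) + 1 then 1 else 0

lemma Amat_col_sum {d : ℕ} (x : Fin d → ℝ) (p : Fin (d - 1)) :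
    ∑ i, Amat d i p * x i = x ⟨(p : ℕ) + 1, by omega⟩ := by
  rw [Finset.sum_eq_single (⟨(p : ℕ) + 1, by omega⟩ : Fin d)]
  · simp [Amat]
  · intro l _ hl
    have : (l : ℕ) ≠ (p : ℕ) + 1 := fun hv => hl (Fin.ext (by simpa using hv))
    simp [Amat, this]
  · intro hmem
    exact absurd (Finset.mem_univ _) hmem

lemma mem_nullSpaceT_Amat {d : ℕ} (x : EuclideanSpace ℝ (Fin d)) :
    x ∈ nullSpaceT (Amat d) ↔ ∀ j : Fin d, 1 ≤ (j : ℕ) → x j = 0 := by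
  rw [nullSpaceT, LinearMap.mem_ker]
  constructor
  · intro h j hj
    have hp : (j : ℕ) - 1 < d - 1 := by omega
    have := congrFun (congrArg (fun v => (v : Fin (d-1) → ℝ)) h) ⟨(j : ℕ) - 1, hp⟩
    simp only [LinearMap.comp_apply, Matrix.mulVecLin_apply] at this
    rw [Matrix.mulVec, dotProduct] at this
    simp only [Matrix.transpose_apply] at this
    rw [Amat_col_sum] at this
    rw [show (⟨(j : ℕ) - 1 + 1, by omega⟩ : Fin d) = j from Fin.ext (by simp; omega)] at this
    simpa using this
  · intro h
    ext p
    simp only [LinearMap.comp_apply, Matrix.mulVecLin_apply]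
    rw [Matrix.mulVec, dotProduct]
    simp only [Matrix.transpose_apply, Pi.zero_apply]
    rw [Amat_col_sum]
    exact h _ (by simp)

lemma Amat_rank {d : ℕ} (hd : 1 ≤ d) : (Amat d).rank = d - 1 := by
  have hmul : (Amat d)ᵀ * Amat d = 1 := by
    ext p q
    rw [Matrix.mul_apply]
    simp only [Matrix.transpose_apply]
    by_cases hpq : p = q
    · subst hpq
      rw [Finset.sum_eq_single (⟨(p : ℕ) + 1, by omega⟩ : Fin d)]
      · simp [Amat, Matrix.one_apply]
      · intro l _ hl
        have : (l : ℕ) ≠ (p : ℕ) + 1 := fun hv => hl (Fin.ext (by simpa using hv))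
        simp [Amat, this]
      · intro hmem; exact absurd (Finset.mem_univ _) hmem
    · have hv : (p : ℕ) ≠ (q : ℕ) := fun hv => hpq (Fin.ext hv)
      rw [Matrix.one_apply_ne hpq]
      refine Finset.sum_eq_zero fun l _ => ?_
      simp only [Amat]
      split_ifs <;> first | ring1 | (exfalso; omega)
  refine le_antisymm ?_ ?_
  · have := (Amat d).rank_le_card_width
    simpa using this
  · have h1 : ((Amat d)ᵀ * Amat d).rank = d - 1 := by
      rw [hmul, Matrix.rank_one, Fintype.card_fin]
    calc d - 1 = ((Amat d)ᵀ * Amat d).rank := h1.symm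
      _ ≤ (Amat d).rank := Matrix.rank_mul_le_right _ _

lemma dot_sum_eq {d : ℕ} (S : Matrix (Fin d) (Fin d) ℝ) (y : Fin d → ℝ) :
    star y ⬝ᵥ S *ᵥ y = ∑ i, y i * ∑ j, S i j * y j := by
  simp [dotProduct, Matrix.mulVec]

lemma pick_sum {d k : ℕ} (hkd : k < d) (y : Fin d → ℝ) :
    ∑ i : Fin d, (if (i : ℕ) = k then (1:ℝ) else 0) * y i = y ⟨k, hkd⟩ := by
  rw [Finset.sum_eq_single (⟨k, hkd⟩ : Fin d)]
  · simp
  · intro l _ hl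
    have : (l : ℕ) ≠ k := fun hv => hl (Fin.ext (by simpa using hv))
    simp [this]
  · intro hmem; exact absurd (Finset.mem_univ _) hmem

lemma pick_sum' {d k : ℕ} (hkd : k < d) (y : Fin d → ℝ) :
    ∑ i : Fin d, y i * (if (i : ℕ) = k then (1:ℝ) else 0) = y ⟨k, hkd⟩ := by
  rw [← pick_sum hkd y]
  exact Finset.sum_congr rfl fun i _ => mul_comm _ _

theorem stmt9 (k d : ℕ) (hk : 1 ≤ k) (hkd : k + 1 < d) :
    ∃ (m : ℕ), k ≤ m ∧ m ≤ d - 1 ∧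
    ∃ (S0 : Matrix (Fin d) (Fin d) ℝ) (A0 : Matrix (Fin d) (Fin m) ℝ)
      (b0 xs : EuclideanSpace ℝ (Fin d)),
      S0.PosDef ∧ A0.rank = m ∧
      (xs ∈ nullSpaceT A0 ∧ ∀ y ∈ nullSpaceT A0, quadObj S0 b0 xs ≤ quadObj S0 b0 y) ∧
      (∀ x', (x' ∈ nullSpaceT A0 ∧ ∀ y ∈ nullSpaceT A0, quadObj S0 b0 x' ≤ quadObj S0 b0 y) →
        x' = xs) ∧
      (∀ i < k,
        (Submodule.orthogonalProjectionOnto (nullSpaceT A0) (mulE (S0 ^ i) (mulE S0 xs - b0)) :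
          EuclideanSpace ℝ (Fin d)) = 0) ∧
      (Submodule.orthogonalProjectionOnto (nullSpaceT A0) (mulE (S0 ^ k) (mulE S0 xs - b0)) :
        EuclideanSpace ℝ (Fin d)) ≠ 0 := by
  have hd0 : 0 < d := by omega
  have hkd' : k < d := by omega
  set z : Fin d := ⟨0, hd0⟩ with hz
  set kf : Fin d := ⟨k, hkd'⟩ with hkf
  set b0 : EuclideanSpace ℝ (Fin d) := WithLp.toLp 2 (fun i : Fin d => if (i : ℕ) = k then (1:ℝ) else 0) with hb0
  -- objective value at points of the null space
  have hb0app : ∀ i : Fin d, b0 i = if (i : ℕ) = k then (1:ℝ) else 0 := fun i => rfl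
  have hquad0 : quadObj (Smat d) b0 0 = 0 := by
    simp [quadObj]
  have hquadN : ∀ y : EuclideanSpace ℝ (Fin d), y ∈ nullSpaceT (Amat d) →
      quadObj (Smat d) b0 y = (1/2) * ∑ i, y i * ∑ j, Smat d i j * y j := by
    intro y hy
    have hyk : y kf = 0 := (mem_nullSpaceT_Amat y).mp hy kf (by simp [hkf]; omega)
    rw [quadObj]
    rw [show ∑ i, b0 i * y i = y kf by
      simpa [hb0app] using pick_sum hkd' (fun i => y i)]
    rw [hyk]
    ring
  have hQnonneg : ∀ y : EuclideanSpace ℝ (Fin d),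
      0 ≤ ∑ i, y i * ∑ j, Smat d i j * y j := by
    intro y
    rcases eq_or_ne y 0 with rfl | hy
    · simp
    · have := (Smat_posDef d).dotProduct_mulVec_pos (x := fun i => y i) (fun h => hy (PiLp.ext fun i => congrFun h i))
      rw [dot_sum_eq] at this
      exact le_of_lt (by simpa using this)
  -- coordinates of the residual vectors
  have hmulE0 : mulE (Smat d) (0 : EuclideanSpace ℝ (Fin d)) = 0 := by
    simp [mulE]
  have hvcoord : ∀ (n : ℕ) (j : Fin d),
      mulE (Smat d ^ n) (mulE (Smat d) 0 - b0) j = -((Smat d ^ n) j kf) := by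
    intro n j
    rw [hmulE0, zero_sub]
    have : mulE (Smat d ^ n) (-b0) j = ∑ p, (Smat d ^ n) j p * (-b0) p := rfl
    rw [this]
    have hneg : ∀ p : Fin d, (-b0) p = -(if (p : ℕ) = k then (1:ℝ) else 0) := fun p => rfl
    calc ∑ p, (Smat d ^ n) j p * (-b0) p
        = -∑ p, (Smat d ^ n) j p * (if (p : ℕ) = k then (1:ℝ) else 0) := by
          rw [← Finset.sum_neg_distrib]
          exact Finset.sum_congr rfl fun p _ => by rw [hneg p]; ring
      _ = -((Smat d ^ n) j kf) := by rw [pick_sum' hkd' (fun p => (Smat d ^ n) j p)]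
  refine ⟨d - 1, by omega, le_rfl, Smat d, Amat d, b0, 0,
    Smat_posDef d, Amat_rank (by omega), ⟨Submodule.zero_mem _, ?_⟩, ?_, ?_, ?_⟩
  · -- minimality
    intro y hy
    rw [hquad0, hquadN y hy]
    have := hQnonneg y
    linarith
  · -- uniqueness
    intro x' ⟨hx'N, hmin⟩
    have h0 := hmin 0 (Submodule.zero_mem _)
    rw [hquad0, hquadN x' hx'N] at h0
    by_contra hne
    have hpos := (Smat_posDef d).dotProduct_mulVec_pos (x := fun i => x' i)
      (fun h => hne (PiLp.ext fun i => congrFun h i))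
    rw [dot_sum_eq] at hpos
    have hpos' : (0:ℝ) < ∑ i, x' i * ∑ j, Smat d i j * x' j := hpos
    linarith
  · -- projections vanish for i < k
    intro i hik
    rw [ZeroMemClass.coe_eq_zero, Submodule.orthogonalProjectionOnto_eq_zero_iff, Submodule.mem_orthogonal]
    intro u hu
    have huz : ∀ j : Fin d, 1 ≤ (j : ℕ) → u j = 0 := (mem_nullSpaceT_Amat u).mp hu
    have : (inner ℝ u (mulE (Smat d ^ i) (mulE (Smat d) 0 - b0)) : ℝ)
        = ∑ j, u j * mulE (Smat d ^ i) (mulE (Smat d) 0 - b0) j := by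
      simp [PiLp.inner_apply, RCLike.inner_apply, mul_comm]
    rw [this]
    refine Finset.sum_eq_zero fun j _ => ?_
    by_cases hj : 1 ≤ (j : ℕ)
    · rw [huz j hj, zero_mul]
    · have hjz : j = z := Fin.ext (by simp [hz]; omega)
      rw [hvcoord i j, hjz]
      rw [(Spow_entry hd0 i kf).1 (by simp [hkf]; omega)]
      ring
  · -- projection at k is nonzero
    intro heq
    have hmem := Submodule.orthogonalProjectionOnto_eq_zero_iff.mp (ZeroMemClass.coe_eq_zero.mp heq)
    set u : EuclideanSpace ℝ (Fin d) := WithLp.toLp 2 (fun i => if i = z then (1:ℝ) else 0) with hu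
    have huN : u ∈ nullSpaceT (Amat d) := by
      rw [mem_nullSpaceT_Amat]
      intro j hj
      have : j ≠ z := fun hv => by rw [hv] at hj; simp [hz] at hj
      show (if j = z then (1:ℝ) else 0) = 0
      simp [this]
    have hinner := (Submodule.mem_orthogonal _ _).mp hmem u huN
    have hexp : (inner ℝ u (mulE (Smat d ^ k) (mulE (Smat d) 0 - b0)) : ℝ)
        = ∑ j, u j * mulE (Smat d ^ k) (mulE (Smat d) 0 - b0) j := by
      simp [PiLp.inner_apply, RCLike.inner_apply, mul_comm]
    rw [hexp] at hinner
    rw [Finset.sum_eq_single z] at hinner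
    · rw [hvcoord k z] at hinner
      rw [(Spow_entry hd0 k kf).2 (by simp [hkf])] at hinner
      have : (u z : ℝ) = 1 := by simp [hu]
      rw [this] at hinner
      norm_num at hinner
    · intro l _ hl
      have : (u l : ℝ) = 0 := by simp [hu, hl]
      rw [this, zero_mul]
    · intro hmem'; exact absurd (Finset.mem_univ _) hmem'
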